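/- As formal power series in the variable u (where u plays the role of q^{1/24}), one has Σ_{n≥1} χ₁₂(n) u^{n²} = u · ∏_{k≥1} (1 − u^{24k}), where χ₁₂(n) equals 1 if n ≡ ±1 (mod 12), −1 if n ≡ ±5 (mod 12), and 0 otherwise. -/

import Mathlib

/-- The character `χ₁₂(n)`: `1` if `n ≡ ±1 (mod 12)`, `−1` if `n ≡ ±5 (mod 12)`,
`0` otherwise. -/
def chi12 (n : ℕ) : ℤ :=
  if n % 12 = 1 ∨ n % 12 = 11 then 1
  else if n % 12 = 5 ∨ n % 12 = 7 then -1
  else 0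

open Finset

private lemma stair_ex (P : Finset ℕ) (M : ℕ) : ∃ j, M - j ∉ P ∨ M < j :=
  ⟨M + 1, Or.inr (Nat.lt_succ_self M)⟩

/-- Length of the "staircase" at the top of `P` starting from `M`. -/
def stair (P : Finset ℕ) (M : ℕ) : ℕ := Nat.find (stair_ex P M)

section StairLemmas

variable {P : Finset ℕ} {M : ℕ}

lemma stair_le (h0 : 0 ∉ P) : stair P M ≤ M := by
  unfold stair
  exact Nat.find_le (Or.inl (by simpa using h0))

lemma stair_not_mem (h0 : 0 ∉ P) : M - stair P M ∉ P := by
  have h := Nat.find_spec (stair_ex P M)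
  have h2 := stair_le (M := M) h0
  unfold stair at *
  rcases h with h | h
  · exact h
  · omega

lemma stair_pos (hM : M ∈ P) : 0 < stair P M := by
  rcases Nat.eq_zero_or_pos (stair P M) with h | h
  · exfalso
    have hs := Nat.find_spec (stair_ex P M)
    unfold stair at h
    rw [h] at hs
    simp at hs
    exact hs hM
  · exact h

lemma mem_of_lt_stair {j : ℕ} (hj : j < stair P M) : M - j ∈ P := by
  unfold stair at hj
  have := Nat.find_min (stair_ex P M) hj
  push_neg at this
  exact this.1

/-- Characterization used to compute `stair` exactly. -/
lemma stair_eq {t : ℕ} (ht1 : M - t ∉ P) (ht2 : t ≤ M) (ht3 : ∀ j < t, M - j ∈ P) :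
    stair P M = t := by
  unfold stair
  rw [Nat.find_eq_iff]
  refine ⟨Or.inl ht1, fun j hj h => ?_⟩
  rcases h with h | h
  · exact h (ht3 j hj)
  · omega

end StairLemmas

/-- Franklin's involution. -/
def franklin (P : Finset ℕ) : Finset ℕ :=
  if h : P.Nonempty then
    if P.min' h ≤ stair P (P.max' h) then
      if P.max' h + 1 = 2 * P.min' h then P
      else insert (P.max' h + 1)
        ((P.erase (P.min' h)).erase (P.max' h + 1 - P.min' h))
    else
      if P.max' h = 2 * stair P (P.max' h) then P
      else insert (stair P (P.max' h))
        (insert (P.max' h - stair P (P.max' h)) (P.erase (P.max' h)))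
  else P

section
variable {P : Finset ℕ}

lemma caseA_all (h : P.Nonempty) (h0 : 0 ∉ P)
    (hst : P.min' h ≤ stair P (P.max' h)) (hne : P.max' h + 1 ≠ 2 * P.min' h) :
    franklin P =
      insert (P.max' h + 1) ((P.erase (P.min' h)).erase (P.max' h + 1 - P.min' h)) ∧
    (franklin P).sum id = P.sum id ∧
    (franklin P).card + 1 = P.card ∧
    0 ∉ franklin P ∧
    franklin (franklin P) = P := by
  set M := P.max' h with hM
  set s := P.min' h with hs
  set t := stair P M with ht
  have hMP : M ∈ P := P.max'_mem h
  have hsP : s ∈ P := P.min'_mem h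
  have hs1 : 1 ≤ s := Nat.pos_of_ne_zero (fun e => h0 (e ▸ hsP))
  have hsM : s ≤ M := P.min'_le M hMP
  have ht1 : 1 ≤ t := stair_pos hMP
  have htM : t ≤ M := stair_le h0
  have hb : M + 1 - s ∈ P := by
    have hlt : s - 1 < t := by omega
    have := mem_of_lt_stair hlt
    have he : M - (s - 1) = M + 1 - s := by omega
    rwa [he] at this
  have hbs : s < M + 1 - s := by
    have h1 : s ≤ M + 1 - s := P.min'_le _ hb
    omega
  set P' := insert (M + 1) ((P.erase s).erase (M + 1 - s)) with hP'
  have hfr : franklin P = P' := by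
    rw [franklin, dif_pos h, if_pos hst, if_neg hne]
  have hsub : ∀ x ∈ (P.erase s).erase (M + 1 - s), x ∈ P := fun x hx =>
    mem_of_mem_erase (mem_of_mem_erase hx)
  have hleM : ∀ x ∈ P, x ≤ M := fun x hx => P.le_max' x hx
  have hgts : ∀ x ∈ (P.erase s).erase (M + 1 - s), s < x := by
    intro x hx
    have hx1 : x ≠ s := (mem_erase.mp (mem_of_mem_erase hx)).1
    have := P.min'_le x (hsub x hx)
    omega
  have hnotin : M + 1 ∉ (P.erase s).erase (M + 1 - s) := by
    intro hx
    exact absurd (hleM _ (hsub _ hx)) (by omega)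
  have hmem2 : M + 1 - s ∈ P.erase s := mem_erase.mpr ⟨by omega, hb⟩
  -- sum
  have e1 : ((P.erase s).erase (M + 1 - s)).sum id + (M + 1 - s) = (P.erase s).sum id :=
    Finset.sum_erase_add _ _ hmem2
  have e2 : (P.erase s).sum id + s = P.sum id := Finset.sum_erase_add _ _ hsP
  have esum : P'.sum id = P.sum id := by
    rw [hP', sum_insert hnotin]
    simp only [id] at *
    omega
  -- card
  have c1 : ((P.erase s).erase (M + 1 - s)).card = (P.erase s).card - 1 :=
    card_erase_of_mem hmem2
  have c2 : (P.erase s).card = P.card - 1 := card_erase_of_mem hsP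
  have c3 : 0 < ((P.erase s).erase (M + 1 - s)).card + 1 := by omega
  have c4 : 0 < (P.erase s).card := card_pos.mpr ⟨_, hmem2⟩
  have ecard : P'.card + 1 = P.card := by
    rw [hP', card_insert_of_notMem hnotin]
    omega
  -- 0 ∉ P'
  have ezero : 0 ∉ P' := by
    intro hx
    rcases mem_insert.mp hx with hx | hx
    · omega
    · exact h0 (hsub _ hx)
  -- involution
  have hP'ne : P'.Nonempty := ⟨M + 1, mem_insert_self _ _⟩
  have hmax' : P'.max' hP'ne = M + 1 := by
    refine le_antisymm (max'_le _ _ _ ?_) (le_max' _ _ (mem_insert_self _ _))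
    intro x hx
    rcases mem_insert.mp hx with hx | hx
    · omega
    · exact le_trans (hleM _ (hsub _ hx)) (by omega)
  have hstair' : stair P' (M + 1) = s := by
    apply stair_eq
    · intro hx
      rcases mem_insert.mp hx with hx | hx
      · omega
      · exact notMem_erase _ _ hx
    · omega
    · intro j hj
      rcases Nat.eq_zero_or_pos j with rfl | hj0
      · rw [Nat.sub_zero, hP']; exact mem_insert_self _ _
      · have hmem : M - (j - 1) ∈ P := mem_of_lt_stair (by omega)
        have he : M - (j - 1) = M + 1 - j := by omega
        rw [he] at hmem
        apply mem_insert_of_mem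
        refine mem_erase.mpr ⟨by omega, mem_erase.mpr ⟨by omega, hmem⟩⟩
  have hmin' : s < P'.min' hP'ne := by
    have hmm := P'.min'_mem hP'ne
    rcases mem_insert.mp hmm with hx | hx
    · omega
    · exact hgts _ hx
  have einv : franklin P' = P := by
    rw [franklin, dif_pos hP'ne]
    rw [hmax', hstair']
    rw [if_neg (show ¬ P'.min' hP'ne ≤ s by omega), if_neg hne]
    rw [erase_insert hnotin, insert_erase hmem2, insert_erase hsP]
  exact ⟨hfr, by rw [hfr]; exact esum, by rw [hfr]; exact ecard, by rw [hfr]; exact ezero,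
    by rw [hfr]; exact einv⟩

end

lemma le_stair {P : Finset ℕ} {M t : ℕ} (h3 : ∀ j < t, M - j ∈ P) (h4 : t ≤ M) :
    t ≤ stair P M := by
  unfold stair
  rw [Nat.le_find_iff]
  intro j hj
  push_neg
  exact ⟨h3 j hj, by omega⟩

lemma caseB_all {P : Finset ℕ} (h : P.Nonempty) (h0 : 0 ∉ P)
    (hst : ¬ P.min' h ≤ stair P (P.max' h)) (hne : P.max' h ≠ 2 * stair P (P.max' h)) :
    franklin P =
      insert (stair P (P.max' h))
        (insert (P.max' h - stair P (P.max' h)) (P.erase (P.max' h))) ∧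
    (franklin P).sum id = P.sum id ∧
    P.card + 1 = (franklin P).card ∧
    0 ∉ franklin P ∧
    franklin (franklin P) = P := by
  set M := P.max' h with hM
  set s := P.min' h with hs
  set t := stair P M with ht
  have hMP : M ∈ P := P.max'_mem h
  have hsP : s ∈ P := P.min'_mem h
  have hs1 : 1 ≤ s := Nat.pos_of_ne_zero (fun e => h0 (e ▸ hsP))
  have hsM : s ≤ M := P.min'_le M hMP
  have ht1 : 1 ≤ t := stair_pos hMP
  have htM : t ≤ M := stair_le h0
  have htnm : M - t ∉ P := stair_not_mem h0
  have hts : t < s := by omega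
  have hMt : t < M - t := by
    have hb : M - (t - 1) ∈ P := mem_of_lt_stair (by omega)
    have := P.min'_le _ hb
    omega
  set P' := insert t (insert (M - t) (P.erase M)) with hP'
  have hfr : franklin P = P' := by
    rw [franklin, dif_pos h, if_neg hst, if_neg hne]
  have hsub : ∀ x ∈ P.erase M, x ∈ P := fun x hx => mem_of_mem_erase hx
  have hltM : ∀ x ∈ P.erase M, x < M := by
    intro x hx
    have h1 := (mem_erase.mp hx).1
    have := P.le_max' x (hsub x hx)
    omega
  have hges : ∀ x ∈ P.erase M, s ≤ x := fun x hx => P.min'_le x (hsub x hx)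
  have hnot1 : M - t ∉ P.erase M := fun hx => htnm (hsub _ hx)
  have hnot2 : t ∉ insert (M - t) (P.erase M) := by
    intro hx
    rcases mem_insert.mp hx with hx | hx
    · omega
    · exact absurd (hges _ hx) (by omega)
  -- sum
  have e2 : (P.erase M).sum id + M = P.sum id := Finset.sum_erase_add _ _ hMP
  have esum : P'.sum id = P.sum id := by
    rw [hP', sum_insert hnot2, sum_insert hnot1]
    simp only [id] at *
    omega
  -- card
  have c2 : (P.erase M).card = P.card - 1 := card_erase_of_mem hMP
  have c4 : 0 < P.card := card_pos.mpr h
  have ecard : P.card + 1 = P'.card := by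
    rw [hP', card_insert_of_notMem hnot2, card_insert_of_notMem hnot1]
    omega
  -- 0 ∉ P'
  have ezero : 0 ∉ P' := by
    intro hx
    rcases mem_insert.mp hx with hx | hx
    · omega
    · rcases mem_insert.mp hx with hx | hx
      · omega
      · exact h0 (hsub _ hx)
  -- involution
  have hP'ne : P'.Nonempty := ⟨t, mem_insert_self _ _⟩
  have hmax' : P'.max' hP'ne = M - 1 := by
    refine le_antisymm (max'_le _ _ _ ?_) (le_max' _ _ ?_)
    · intro x hx
      rcases mem_insert.mp hx with hx | hx
      · omega
      · rcases mem_insert.mp hx with hx | hx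
        · omega
        · have := hltM _ hx
          omega
    · by_cases h1 : t = 1
      · have : M - t = M - 1 := by omega
        rw [← this]
        exact mem_insert_of_mem (mem_insert_self _ _)
      · have hmem : M - 1 ∈ P := mem_of_lt_stair (by omega)
        exact mem_insert_of_mem (mem_insert_of_mem
          (mem_erase.mpr ⟨by omega, hmem⟩))
  have hstge : t ≤ stair P' (M - 1) := by
    apply le_stair
    · intro j hj
      by_cases hjt : j = t - 1
      · have : M - 1 - j = M - t := by omega
        rw [this]
        exact mem_insert_of_mem (mem_insert_self _ _)
      · have hmem : M - (j + 1) ∈ P := mem_of_lt_stair (by omega)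
        have he : M - 1 - j = M - (j + 1) := by omega
        rw [he]
        exact mem_insert_of_mem (mem_insert_of_mem
          (mem_erase.mpr ⟨by omega, hmem⟩))
    · omega
  have hmin' : P'.min' hP'ne = t := by
    refine le_antisymm (min'_le _ _ (mem_insert_self _ _)) (le_min' _ _ _ ?_)
    intro x hx
    rcases mem_insert.mp hx with hx | hx
    · omega
    · rcases mem_insert.mp hx with hx | hx
      · omega
      · have := hges _ hx
        omega
  have einv : franklin P' = P := by
    rw [franklin, dif_pos hP'ne]
    rw [hmin', hmax']
    rw [if_pos hstge, if_neg (show ¬ (M - 1 + 1 = 2 * t) by omega)]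
    rw [show M - 1 + 1 = M from by omega]
    rw [erase_insert hnot2, erase_insert hnot1, insert_erase hMP]
  exact ⟨hfr, by rw [hfr]; exact esum, by rw [hfr]; exact ecard, by rw [hfr]; exact ezero,
    by rw [hfr]; exact einv⟩

lemma franklin_empty : franklin ∅ = ∅ := by
  rw [franklin, dif_neg]
  simp

lemma franklin_spec (P : Finset ℕ) (h0 : 0 ∉ P) :
    (franklin P).sum id = P.sum id ∧ 0 ∉ franklin P ∧ franklin (franklin P) = P ∧
      (franklin P ≠ P →
        ((franklin P).card + 1 = P.card ∨ P.card + 1 = (franklin P).card)) := by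
  by_cases h : P.Nonempty
  · by_cases hst : P.min' h ≤ stair P (P.max' h)
    · by_cases hne : P.max' h + 1 = 2 * P.min' h
      · have hfix : franklin P = P := by rw [franklin, dif_pos h, if_pos hst, if_pos hne]
        rw [hfix]
        exact ⟨rfl, h0, hfix, fun hc => absurd rfl hc⟩
      · obtain ⟨_, e1, e2, e3, e4⟩ := caseA_all h h0 hst hne
        exact ⟨e1, e3, e4, fun _ => Or.inl e2⟩
    · by_cases hne : P.max' h = 2 * stair P (P.max' h)
      · have hfix : franklin P = P := by rw [franklin, dif_pos h, if_neg hst, if_pos hne]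
        rw [hfix]
        exact ⟨rfl, h0, hfix, fun hc => absurd rfl hc⟩
      · obtain ⟨_, e1, e2, e3, e4⟩ := caseB_all h h0 hst hne
        exact ⟨e1, e3, e4, fun _ => Or.inr e2⟩
  · have hP : P = ∅ := not_nonempty_iff_eq_empty.mp h
    subst hP
    rw [franklin_empty]
    exact ⟨rfl, by simp, franklin_empty, fun hc => absurd rfl hc⟩

lemma fixed_classify (P : Finset ℕ) (h0 : 0 ∉ P) (hfix : franklin P = P) :
    P = ∅ ∨ (∃ k, 0 < k ∧ P = Finset.Icc k (2 * k - 1)) ∨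
      (∃ k, 0 < k ∧ P = Finset.Icc (k + 1) (2 * k)) := by
  by_cases h : P.Nonempty
  · right
    set M := P.max' h with hM
    set s := P.min' h with hs
    set t := stair P M with ht
    have hMP : M ∈ P := P.max'_mem h
    have hsP : s ∈ P := P.min'_mem h
    have hs1 : 1 ≤ s := Nat.pos_of_ne_zero (fun e => h0 (e ▸ hsP))
    have hsM : s ≤ M := P.min'_le M hMP
    have ht1 : 1 ≤ t := stair_pos hMP
    have htM : t ≤ M := stair_le h0
    by_cases hst : s ≤ t
    · by_cases hne : M + 1 = 2 * s
      · left
        refine ⟨s, hs1, ?_⟩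
        ext x
        simp only [Finset.mem_Icc]
        constructor
        · intro hx
          have := P.min'_le x hx
          have := P.le_max' x hx
          omega
        · intro hx
          have h2 : M - (M - x) ∈ P := mem_of_lt_stair (show M - x < t by omega)
          have he : M - (M - x) = x := by omega
          rwa [he] at h2
      · exfalso
        obtain ⟨_, _, e2, _, _⟩ := caseA_all h h0 hst hne
        rw [hfix] at e2
        omega
    · by_cases hne : M = 2 * t
      · right
        refine ⟨t, ht1, ?_⟩
        ext x
        simp only [Finset.mem_Icc]
        constructor
        · intro hx
          have := P.min'_le x hx
          have := P.le_max' x hx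
          omega
        · intro hx
          have h2 : M - (M - x) ∈ P := mem_of_lt_stair (show M - x < t by omega)
          have he : M - (M - x) = x := by omega
          rwa [he] at h2
      · exfalso
        obtain ⟨_, _, e2, _, _⟩ := caseB_all h h0 hst hne
        rw [hfix] at e2
        omega
  · exact Or.inl (not_nonempty_iff_eq_empty.mp h)

lemma fixedA (k : ℕ) (hk : 0 < k) :
    franklin (Finset.Icc k (2 * k - 1)) = Finset.Icc k (2 * k - 1) := by
  have hne : (Finset.Icc k (2 * k - 1)).Nonempty := ⟨k, Finset.mem_Icc.mpr ⟨le_refl k, by omega⟩⟩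
  have hmax : (Finset.Icc k (2 * k - 1)).max' hne = 2 * k - 1 := by
    refine le_antisymm (Finset.max'_le _ _ _ ?_) (Finset.le_max' _ _ ?_)
    · intro x hx; exact (Finset.mem_Icc.mp hx).2
    · exact Finset.mem_Icc.mpr ⟨by omega, le_refl _⟩
  have hmin : (Finset.Icc k (2 * k - 1)).min' hne = k := by
    refine le_antisymm (Finset.min'_le _ _ ?_) (Finset.le_min' _ _ _ ?_)
    · exact Finset.mem_Icc.mpr ⟨le_refl _, by omega⟩
    · intro x hx; exact (Finset.mem_Icc.mp hx).1
  have hstair : stair (Finset.Icc k (2 * k - 1)) (2 * k - 1) = k := by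
    apply stair_eq
    · simp only [Finset.mem_Icc]
      omega
    · omega
    · intro j hj
      simp only [Finset.mem_Icc]
      omega
  rw [franklin, dif_pos hne, hmax, hmin, hstair, if_pos (le_refl k),
    if_pos (show 2 * k - 1 + 1 = 2 * k by omega)]

lemma fixedB (k : ℕ) (hk : 0 < k) :
    franklin (Finset.Icc (k + 1) (2 * k)) = Finset.Icc (k + 1) (2 * k) := by
  have hne : (Finset.Icc (k + 1) (2 * k)).Nonempty :=
    ⟨k + 1, Finset.mem_Icc.mpr ⟨le_refl _, by omega⟩⟩
  have hmax : (Finset.Icc (k + 1) (2 * k)).max' hne = 2 * k := by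
    refine le_antisymm (Finset.max'_le _ _ _ ?_) (Finset.le_max' _ _ ?_)
    · intro x hx; exact (Finset.mem_Icc.mp hx).2
    · exact Finset.mem_Icc.mpr ⟨by omega, le_refl _⟩
  have hmin : (Finset.Icc (k + 1) (2 * k)).min' hne = k + 1 := by
    refine le_antisymm (Finset.min'_le _ _ ?_) (Finset.le_min' _ _ _ ?_)
    · exact Finset.mem_Icc.mpr ⟨le_refl _, by omega⟩
    · intro x hx; exact (Finset.mem_Icc.mp hx).1
  have hstair : stair (Finset.Icc (k + 1) (2 * k)) (2 * k) = k := by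
    apply stair_eq
    · simp only [Finset.mem_Icc]
      omega
    · omega
    · intro j hj
      simp only [Finset.mem_Icc]
      omega
  rw [franklin, dif_pos hne, hmax, hmin, hstair,
    if_neg (show ¬ (k + 1 ≤ k) by omega), if_pos rfl]

lemma two_mul_sum_Icc (a n : ℕ) :
    2 * (Finset.Icc a (a + n)).sum id = (n + 1) * (2 * a + n) := by
  have him : Finset.Icc a (a + n) = (Finset.range (n + 1)).image (fun i => a + i) := by
    ext x
    simp only [Finset.mem_Icc, Finset.mem_image, Finset.mem_range]
    constructor
    · intro hx; exact ⟨x - a, by omega, by omega⟩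
    · rintro ⟨i, hi, rfl⟩; omega
  rw [him, Finset.sum_image (by intro x _ y _ hxy; beta_reduce at hxy; omega)]
  simp only [id]
  rw [Finset.sum_add_distrib, Finset.sum_const, Finset.card_range, smul_eq_mul]
  have g : (∑ x ∈ Finset.range (n + 1), x) * 2 = (n + 1) * n := by
    rw [Finset.sum_range_id_mul_two, Nat.add_sub_cancel]
  ring_nf
  ring_nf at g
  linarith [g]

/-- Partitions of `m` into distinct (positive) parts, as finsets. -/
def parts (m : ℕ) : Finset (Finset ℕ) :=
  (Finset.Icc 1 m).powerset.filter (fun P => P.sum id = m)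

lemma mem_parts {m : ℕ} {P : Finset ℕ} : P ∈ parts m ↔ 0 ∉ P ∧ P.sum id = m := by
  simp only [parts, Finset.mem_filter, Finset.mem_powerset]
  constructor
  · rintro ⟨hsub, hsum⟩
    refine ⟨fun h0 => ?_, hsum⟩
    have := Finset.mem_Icc.mp (hsub h0)
    omega
  · rintro ⟨h0, hsum⟩
    refine ⟨fun x hx => ?_, hsum⟩
    have hx1 : x ≠ 0 := fun e => h0 (e ▸ hx)
    have hxm : x ≤ m := by
      have := Finset.single_le_sum (f := (id : ℕ → ℕ)) (fun i _ => Nat.zero_le i) hx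
      simp only [id_eq] at this hsum
      omega
    exact Finset.mem_Icc.mpr ⟨by omega, hxm⟩

lemma sum_parts_fixed (m : ℕ) :
    ∑ P ∈ parts m, (-1 : ℤ) ^ P.card =
      ∑ P ∈ (parts m).filter (fun P => franklin P = P), (-1 : ℤ) ^ P.card := by
  rw [← Finset.sum_filter_add_sum_filter_not (parts m) (fun P => franklin P = P)]
  have hz : ∑ P ∈ (parts m).filter (fun P => ¬franklin P = P), (-1 : ℤ) ^ P.card = 0 := by
    apply Finset.sum_involution (g := fun P _ => franklin P)
    · intro a ha
      obtain ⟨hmem, hnf⟩ := Finset.mem_filter.mp ha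
      obtain ⟨h0, hsum⟩ := mem_parts.mp hmem
      obtain ⟨_, _, _, e4⟩ := franklin_spec a h0
      rcases e4 hnf with hc | hc
      · rw [show a.card = (franklin a).card + 1 from hc.symm, pow_succ]
        ring
      · rw [show (franklin a).card = a.card + 1 from hc.symm, pow_succ]
        ring
    · intro a ha _
      exact (Finset.mem_filter.mp ha).2
    · intro a ha
      obtain ⟨hmem, hnf⟩ := Finset.mem_filter.mp ha
      obtain ⟨h0, hsum⟩ := mem_parts.mp hmem
      obtain ⟨e1, e2, e3, _⟩ := franklin_spec a h0
      refine Finset.mem_filter.mpr ⟨mem_parts.mpr ⟨e2, by rw [e1, hsum]⟩, ?_⟩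
      rw [e3]
      exact fun e => hnf e.symm
    · intro a ha
      obtain ⟨hmem, _⟩ := Finset.mem_filter.mp ha
      obtain ⟨h0, _⟩ := mem_parts.mp hmem
      exact (franklin_spec a h0).2.2.1
  rw [hz, add_zero]

lemma sum_IccA (k : ℕ) (hk : 0 < k) :
    2 * (Finset.Icc k (2 * k - 1)).sum id + k = 3 * k * k := by
  obtain ⟨j, rfl⟩ : ∃ j, k = j + 1 := ⟨k - 1, by omega⟩
  have h := two_mul_sum_Icc (j + 1) j
  rw [show j + 1 + j = 2 * (j + 1) - 1 by omega] at h
  nlinarith [h]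

lemma sum_IccB (k : ℕ) (hk : 0 < k) :
    2 * (Finset.Icc (k + 1) (2 * k)).sum id = 3 * k * k + k := by
  obtain ⟨j, rfl⟩ : ∃ j, k = j + 1 := ⟨k - 1, by omega⟩
  have h := two_mul_sum_Icc (j + 2) j
  rw [show j + 2 + j = 2 * (j + 1) by omega] at h
  nlinarith [h]

lemma pentA_inj {m k j : ℕ} (h1 : 2 * m + k = 3 * k * k) (h2 : 2 * m + j = 3 * j * j) :
    k = j := by
  have h1' : (2 : ℤ) * m + k = 3 * k * k := by exact_mod_cast h1
  have h2' : (2 : ℤ) * m + j = 3 * j * j := by exact_mod_cast h2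
  have hz : ((k : ℤ) - j) * (3 * ((k : ℤ) + j) - 1) = 0 := by linear_combination h2' - h1'
  rcases mul_eq_zero.mp hz with h | h
  · omega
  · omega

lemma pentB_inj {m k j : ℕ} (h1 : 2 * m = 3 * k * k + k) (h2 : 2 * m = 3 * j * j + j) :
    k = j := by
  have h1' : (2 : ℤ) * m = 3 * k * k + k := by exact_mod_cast h1
  have h2' : (2 : ℤ) * m = 3 * j * j + j := by exact_mod_cast h2
  have hz : ((k : ℤ) - j) * (3 * ((k : ℤ) + j) + 1) = 0 := by linear_combination h2' - h1'
  rcases mul_eq_zero.mp hz with h | h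
  · omega
  · omega

lemma pentAB {m k j : ℕ} (h1 : 2 * m + k = 3 * k * k) (h2 : 2 * m = 3 * j * j + j) :
    k = 0 ∧ j = 0 := by
  have h1' : (2 : ℤ) * m + k = 3 * k * k := by exact_mod_cast h1
  have h2' : (2 : ℤ) * m = 3 * j * j + j := by exact_mod_cast h2
  have hz : ((k : ℤ) + j) * (3 * ((k : ℤ) - j) - 1) = 0 := by linear_combination h2' - h1'
  rcases mul_eq_zero.mp hz with h | h
  · omega
  · omega

lemma parts_zero : parts 0 = {∅} := by
  ext P
  rw [mem_parts, Finset.mem_singleton]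
  constructor
  · rintro ⟨h0, hsum⟩
    by_contra hne
    obtain ⟨x, hx⟩ := Finset.nonempty_iff_ne_empty.mpr hne
    have hx0 : x ≠ 0 := fun e => h0 (e ▸ hx)
    have := Finset.single_le_sum (f := (id : ℕ → ℕ)) (fun i _ => Nat.zero_le i) hx
    simp only [id_eq] at this hsum
    omega
  · rintro rfl
    exact ⟨by simp, by simp⟩

lemma sum_parts_pentA (m k : ℕ) (hk : 0 < k) (hm : 2 * m + k = 3 * k * k) :
    ∑ P ∈ parts m, (-1 : ℤ) ^ P.card = (-1) ^ k := by
  rw [sum_parts_fixed]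
  have hfil : (parts m).filter (fun P => franklin P = P) = {Finset.Icc k (2 * k - 1)} := by
    ext Q
    simp only [Finset.mem_filter, Finset.mem_singleton]
    constructor
    · rintro ⟨hQ, hfix⟩
      obtain ⟨h0, hsum⟩ := mem_parts.mp hQ
      rcases fixed_classify Q h0 hfix with rfl | ⟨j, hj, rfl⟩ | ⟨j, hj, rfl⟩
      · exfalso
        simp at hsum
        nlinarith [hm, hk, hsum]
      · have hsj := sum_IccA j hj
        rw [hsum] at hsj
        rw [pentA_inj hsj hm]
      · exfalso
        have hsj := sum_IccB j hj
        rw [hsum] at hsj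
        have := pentAB hm hsj
        omega
    · rintro rfl
      have hsum : (Finset.Icc k (2 * k - 1)).sum id = m := by
        have h2 := sum_IccA k hk
        linarith [h2, hm]
      exact ⟨mem_parts.mpr ⟨by simp only [Finset.mem_Icc]; omega, hsum⟩, fixedA k hk⟩
  rw [hfil, Finset.sum_singleton, Nat.card_Icc, show 2 * k - 1 + 1 - k = k by omega]

lemma sum_parts_pentB (m k : ℕ) (hk : 0 < k) (hm : 2 * m = 3 * k * k + k) :
    ∑ P ∈ parts m, (-1 : ℤ) ^ P.card = (-1) ^ k := by
  rw [sum_parts_fixed]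
  have hfil : (parts m).filter (fun P => franklin P = P) = {Finset.Icc (k + 1) (2 * k)} := by
    ext Q
    simp only [Finset.mem_filter, Finset.mem_singleton]
    constructor
    · rintro ⟨hQ, hfix⟩
      obtain ⟨h0, hsum⟩ := mem_parts.mp hQ
      rcases fixed_classify Q h0 hfix with rfl | ⟨j, hj, rfl⟩ | ⟨j, hj, rfl⟩
      · exfalso
        simp at hsum
        nlinarith [hm, hk, hsum]
      · exfalso
        have hsj := sum_IccA j hj
        rw [hsum] at hsj
        have := pentAB hsj hm
        omega
      · have hsj := sum_IccB j hj
        rw [hsum] at hsj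
        rw [pentB_inj hsj hm]
    · rintro rfl
      have hsum : (Finset.Icc (k + 1) (2 * k)).sum id = m := by
        have h2 := sum_IccB k hk
        linarith [h2, hm]
      exact ⟨mem_parts.mpr ⟨by simp only [Finset.mem_Icc]; omega, hsum⟩, fixedB k hk⟩
  rw [hfil, Finset.sum_singleton, Nat.card_Icc, show 2 * k + 1 - (k + 1) = k by omega]

lemma sum_parts_nonpent (m : ℕ)
    (hm : ∀ k, ¬(2 * m + k = 3 * k * k) ∧ ¬(2 * m = 3 * k * k + k)) :
    ∑ P ∈ parts m, (-1 : ℤ) ^ P.card = 0 := by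
  rw [sum_parts_fixed]
  have hfil : (parts m).filter (fun P => franklin P = P) = ∅ := by
    ext Q
    simp only [Finset.mem_filter, Finset.notMem_empty, iff_false, not_and]
    intro hQ hfix
    obtain ⟨h0, hsum⟩ := mem_parts.mp hQ
    rcases fixed_classify Q h0 hfix with rfl | ⟨j, hj, rfl⟩ | ⟨j, hj, rfl⟩
    · simp at hsum
      exact (hm 0).1 (by omega)
    · have hsj := sum_IccA j hj
      rw [hsum] at hsj
      exact (hm j).1 hsj
    · have hsj := sum_IccB j hj
      rw [hsum] at hsj
      exact (hm j).2 hsj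
  rw [hfil, Finset.sum_empty]

lemma sum_parts_pent0 : ∑ P ∈ parts 0, (-1 : ℤ) ^ P.card = 1 := by
  rw [parts_zero, Finset.sum_singleton, Finset.card_empty, pow_zero]

open PowerSeries in
lemma prod_neg_pow (t : Finset ℕ) :
    (∏ i ∈ t, (-((X : ℤ⟦X⟧) ^ (24 * (i + 1))))) =
      (-1) ^ t.card * (X : ℤ⟦X⟧) ^ (∑ i ∈ t, 24 * (i + 1)) := by
  calc (∏ i ∈ t, (-((X : ℤ⟦X⟧) ^ (24 * (i + 1)))))
      = ∏ i ∈ t, ((-1) * (X : ℤ⟦X⟧) ^ (24 * (i + 1))) := by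
        refine Finset.prod_congr rfl fun i _ => ?_
        ring
    _ = (∏ _i ∈ t, (-1 : ℤ⟦X⟧)) * ∏ i ∈ t, (X : ℤ⟦X⟧) ^ (24 * (i + 1)) :=
        Finset.prod_mul_distrib
    _ = (-1) ^ t.card * (X : ℤ⟦X⟧) ^ (∑ i ∈ t, 24 * (i + 1)) := by
        rw [Finset.prod_const, Finset.prod_pow_eq_pow_sum]

open PowerSeries in
lemma coeff_prodN (N j : ℕ) :
    PowerSeries.coeff (R := ℤ) j (∏ k ∈ Finset.range N, (1 - (X : ℤ⟦X⟧) ^ (24 * (k + 1)))) =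
      ∑ S ∈ (Finset.range N).powerset,
        (if (∑ k ∈ S, 24 * (k + 1)) = j then (-1 : ℤ) ^ S.card else 0) := by
  rw [Finset.prod_congr rfl
    (fun k _ => show (1 - (X : ℤ⟦X⟧) ^ (24 * (k + 1))) =
      (-((X : ℤ⟦X⟧) ^ (24 * (k + 1)))) + 1 from by ring)]
  rw [Finset.prod_add, map_sum]
  refine Finset.sum_congr rfl fun S hS => ?_
  rw [Finset.prod_const_one, mul_one, prod_neg_pow]
  have hC : ((-1 : ℤ⟦X⟧)) ^ S.card = PowerSeries.C ((-1 : ℤ) ^ S.card) := by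
    rw [map_pow, map_neg, map_one]
  rw [hC, PowerSeries.coeff_C_mul, PowerSeries.coeff_X_pow]
  by_cases h : (∑ k ∈ S, 24 * (k + 1)) = j
  · rw [if_pos h, if_pos h.symm, mul_one]
  · rw [if_neg h, if_neg (fun hh => h hh.symm), mul_zero]

lemma bridge (m N : ℕ) (hmN : m ≤ N) :
    (∑ S ∈ (Finset.range N).powerset,
        (if (∑ k ∈ S, 24 * (k + 1)) = 24 * m then (-1 : ℤ) ^ S.card else 0)) =
      ∑ P ∈ parts m, (-1 : ℤ) ^ P.card := by
  rw [← Finset.sum_filter]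
  refine Finset.sum_nbij' (fun S => S.image (· + 1)) (fun P => P.image (· - 1)) ?_ ?_ ?_ ?_ ?_
  · intro S hS
    obtain ⟨hsub, hsum⟩ := Finset.mem_filter.mp hS
    refine mem_parts.mpr ⟨by simp, ?_⟩
    rw [Finset.sum_image (by intro x _ y _ h; beta_reduce at h; omega)]
    have h24 : (∑ k ∈ S, 24 * (k + 1)) = 24 * ∑ k ∈ S, (k + 1) := by
      rw [Finset.mul_sum]
    simp only [id_eq]
    omega
  · intro P hP
    obtain ⟨h0, hsum⟩ := mem_parts.mp hP
    have hsum' : (∑ x ∈ P, x) = m := hsum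
    have hle : ∀ x ∈ P, 1 ≤ x ∧ x ≤ m := by
      intro x hx
      have h1 : x ≠ 0 := fun e => h0 (e ▸ hx)
      have := Finset.single_le_sum (f := fun (i : ℕ) => i) (fun i _ => Nat.zero_le i) hx
      omega
    refine Finset.mem_filter.mpr ⟨Finset.mem_powerset.mpr ?_, ?_⟩
    · intro y hy
      obtain ⟨x, hx, rfl⟩ := Finset.mem_image.mp hy
      have := hle x hx
      exact Finset.mem_range.mpr (by omega)
    · rw [Finset.sum_image (by intro x hx y hy h; have := hle x hx; have := hle y hy; beta_reduce at h; omega)]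
      have : ∀ x ∈ P, 24 * (x - 1 + 1) = 24 * x := by
        intro x hx; have := hle x hx; omega
      rw [Finset.sum_congr rfl this, ← Finset.mul_sum, hsum']
  · intro S hS
    show ((S.image (· + 1)).image (· - 1)) = S
    rw [Finset.image_image]
    have : ((fun x => x - 1) ∘ fun x => x + 1) = id := funext fun x => by simp
    rw [this, Finset.image_id]
  · intro P hP
    obtain ⟨h0, _⟩ := mem_parts.mp hP
    show ((P.image (· - 1)).image (· + 1)) = P
    rw [Finset.image_image]
    have : ∀ x ∈ P, ((fun x => x + 1) ∘ fun x => x - 1) x = id x := by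
      intro x hx
      have h1 : x ≠ 0 := fun e => h0 (e ▸ hx)
      simp only [Function.comp, id_eq]
      omega
    rw [Finset.image_congr (fun x hx => this x hx), Finset.image_id]
  · intro S hS
    rw [Finset.card_image_of_injective _ (fun x y h => by omega)]

lemma chi12_ne_zero_mod (r : ℕ) (h : chi12 r ≠ 0) :
    r % 12 = 1 ∨ r % 12 = 5 ∨ r % 12 = 7 ∨ r % 12 = 11 := by
  unfold chi12 at h
  split_ifs at h with h1 h2
  · tauto
  · tauto
  · exact absurd rfl h

lemma chi12_sq_mod (r : ℕ) (h : chi12 r ≠ 0) : r * r % 24 = 1 := by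
  have h12 := chi12_ne_zero_mod r h
  have hq : r = 12 * (r / 12) + r % 12 := (Nat.div_add_mod r 12).symm
  set q := r / 12 with hqd
  rcases h12 with hb | hb | hb | hb
  · have e : r * r = 24 * (6 * (q * q) + q) + 1 := by
      rw [show r = 12 * q + 1 by omega]; ring
    rw [e, Nat.mul_add_mod]
  · have e : r * r = 24 * (6 * (q * q) + 5 * q + 1) + 1 := by
      rw [show r = 12 * q + 5 by omega]; ring
    rw [e, Nat.mul_add_mod]
  · have e : r * r = 24 * (6 * (q * q) + 7 * q + 2) + 1 := by
      rw [show r = 12 * q + 7 by omega]; ring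
    rw [e, Nat.mul_add_mod]
  · have e : r * r = 24 * (6 * (q * q) + 11 * q + 5) + 1 := by
      rw [show r = 12 * q + 11 by omega]; ring
    rw [e, Nat.mul_add_mod]

lemma chi12_6k1 (k : ℕ) : chi12 (6 * k + 1) = (-1) ^ k := by
  rcases Nat.even_or_odd k with ⟨a, rfl⟩ | ⟨a, rfl⟩
  · rw [chi12, if_pos (Or.inl (by omega)), (Even.neg_one_pow ⟨a, rfl⟩ : (-1 : ℤ) ^ (a + a) = 1)]
  · rw [chi12, if_neg (by omega), if_pos (Or.inr (by omega)),
      (Odd.neg_one_pow ⟨a, rfl⟩ : (-1 : ℤ) ^ (2 * a + 1) = -1)]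

lemma chi12_6k5 (k : ℕ) : chi12 (6 * k + 5) = (-1) ^ (k + 1) := by
  rcases Nat.even_or_odd k with ⟨a, rfl⟩ | ⟨a, rfl⟩
  · rw [chi12, if_neg (by omega), if_pos (Or.inl (by omega))]
    rw [(Odd.neg_one_pow ⟨a, by omega⟩ : (-1 : ℤ) ^ (a + a + 1) = -1)]
  · rw [chi12, if_pos (Or.inr (by omega))]
    rw [(Even.neg_one_pow ⟨a + 1, by omega⟩ : (-1 : ℤ) ^ (2 * a + 1 + 1) = 1)]

/-- The eta-function identity
`Σ_{n≥1} χ₁₂(n) u^{n²} = u · ∏_{k≥1} (1 − u^{24k})` in `ℤ[[u]]`.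
The left side is the power series whose `N`-th coefficient is `χ₁₂(√N)` when
`N` is a perfect square (and `0` otherwise, noting `χ₁₂(0) = 0`); the infinite
product is interpreted t-adically via its truncations. -/
theorem eta_series_identity :
    ∀ N n : ℕ, n ≤ N →
      (PowerSeries.coeff (R := ℤ) n)
          (PowerSeries.mk fun k =>
            if Nat.sqrt k ^ 2 = k then chi12 (Nat.sqrt k) else 0) =
      (PowerSeries.coeff (R := ℤ) n)
          (PowerSeries.X *
            ∏ k ∈ Finset.range N, (1 - PowerSeries.X ^ (24 * (k + 1)))) := by
  intro N n hn
  rw [PowerSeries.coeff_mk]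
  rcases n with _ | j
  · have hL : (if Nat.sqrt 0 ^ 2 = 0 then chi12 (Nat.sqrt 0) else 0) = 0 := by
      norm_num [Nat.sqrt_zero, chi12]
    rw [hL]
    rw [PowerSeries.coeff_zero_eq_constantCoeff, map_mul]
    simp
  · rw [PowerSeries.coeff_succ_X_mul, coeff_prodN]
    by_cases h24 : 24 ∣ j
    · obtain ⟨m, rfl⟩ := h24
      rw [bridge m N (by omega)]
      by_cases hpent : ∃ k, (2 * m + k = 3 * k * k) ∨ (2 * m = 3 * k * k + k)
      · obtain ⟨k, hk⟩ := hpent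
        rcases Nat.eq_zero_or_pos k with rfl | hkpos
        · have hm : m = 0 := by omega
          subst hm
          rw [sum_parts_pent0]
          norm_num [Nat.sqrt_one, chi12]
        · rcases hk with hk | hk
          · rw [sum_parts_pentA m k hkpos hk]
            obtain ⟨a, rfl⟩ : ∃ a, k = a + 1 := ⟨k - 1, by omega⟩
            have hrr : (6 * a + 5) * (6 * a + 5) = 24 * m + 1 := by linarith [hk]
            have hsq : Nat.sqrt (24 * m + 1) = 6 * a + 5 := by
              rw [← hrr]; exact Nat.sqrt_eq _
            rw [hsq, if_pos (by rw [pow_two]; exact hrr), chi12_6k5]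
          · rw [sum_parts_pentB m k hkpos hk]
            have hrr : (6 * k + 1) * (6 * k + 1) = 24 * m + 1 := by linarith [hk]
            have hsq : Nat.sqrt (24 * m + 1) = 6 * k + 1 := by
              rw [← hrr]; exact Nat.sqrt_eq _
            rw [hsq, if_pos (by rw [pow_two]; exact hrr), chi12_6k1]
      · push_neg at hpent
        rw [sum_parts_nonpent m hpent]
        split_ifs with hsq
        · by_contra hchi
          have h12 := chi12_ne_zero_mod _ hchi
          have hr6 : Nat.sqrt (24 * m + 1) % 6 = 1 ∨ Nat.sqrt (24 * m + 1) % 6 = 5 := by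
            omega
          set r := Nat.sqrt (24 * m + 1) with hrd
          have hrr : r * r = 24 * m + 1 := by rw [← pow_two]; exact hsq
          have hq : r = 6 * (r / 6) + r % 6 := (Nat.div_add_mod r 6).symm
          set q := r / 6 with hqd
          rcases hr6 with h6 | h6
          · have hr : r = 6 * q + 1 := by omega
            have h2 : 2 * m = 3 * q * q + q := by nlinarith [hrr, hr]
            exact (hpent q).2 h2
          · have hr : r = 6 * q + 5 := by omega
            have h2 : 2 * m + (q + 1) = 3 * (q + 1) * (q + 1) := by nlinarith [hrr, hr]
            exact (hpent (q + 1)).1 h2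
        · rfl
    · rw [Finset.sum_eq_zero (fun S _ => ?_)]
      swap
      · rw [if_neg]
        intro hc
        exact h24 ⟨∑ k ∈ S, (k + 1), by rw [← hc, Finset.mul_sum]⟩
      · split_ifs with hsq
        · by_contra hchi
          have := chi12_sq_mod _ hchi
          rw [← pow_two, hsq] at this
          omega
        · rfl
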